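/- Value of the Tsallis-entropy-regularized minimum: under the hypotheses of the ent-max lemma (0 ≤ q < 1, λ > 0, Q : ℝ^m → ℝ measurable, C ∈ ℝ with φ*(u) := exp_q(-(1/λ)Q(u) + C) a probability density and ∫|Q|φ* < ∞), the minimum value of J(φ) := ∫ Q φ du - λ H_q(φ) over probability densities equals ((1-q)/(2-q)) ∫ Q(u) φ*(u) du + (λ/(2-q))(C - 1). -/

import Mathlib

open Real MeasureTheory

/-- The `q`-exponential: `exp_q(x) = [1 + (1-q)x]_+ ^ (1/(1-q))`. -/
noncomputable def qexp (q x : ℝ) : ℝ := (max (1 + (1 - q) * x) 0) ^ (1 / (1 - q))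

/-- The `q`-logarithm: `log_q(x) = (x^(1-q) - 1)/(1-q)` (for `x > 0`). -/
noncomputable def qlog (q x : ℝ) : ℝ := (x ^ (1 - q) - 1) / (1 - q)

/-- The deformed `q`-entropy of a density `φ` on `ℝᵐ`:
`H_q(φ) = -(1/(2-q))(∫ φ log_q φ - 1)`. -/
noncomputable def deformedEntropy {m : ℕ} (q : ℝ) (φ : (Fin m → ℝ) → ℝ) : ℝ :=
  -(1 / (2 - q)) * ((∫ u : Fin m → ℝ, φ u * qlog q (φ u)) - 1)

/-- The Tsallis-entropy-regularized objective `J(φ) = ∫ Q φ - λ H_q(φ)`. -/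
noncomputable def Jreg {m : ℕ} (q lam : ℝ) (Q φ : (Fin m → ℝ) → ℝ) : ℝ :=
  (∫ u : Fin m → ℝ, Q u * φ u) - lam * deformedEntropy q φ

/-- Convexity tangent inequality for `x ↦ x^p`, `p ≥ 1`, on `[0,∞)`. -/
lemma rpow_tangent_line {x y p : ℝ} (hx : 0 ≤ x) (hy : 0 < y) (hp : 1 ≤ p) :
    y ^ p + p * y ^ (p - 1) * (x - y) ≤ x ^ p := by
  have hs : -1 ≤ x / y - 1 := by
    have : 0 ≤ x / y := div_nonneg hx hy.le
    linarith
  have h := one_add_mul_self_le_rpow_one_add hs hp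
  have h1 : (1 : ℝ) + (x / y - 1) = x / y := by ring
  rw [h1, Real.div_rpow hx hy.le] at h
  have hyp : (0:ℝ) < y ^ p := Real.rpow_pos_of_pos hy p
  have h2 := mul_le_mul_of_nonneg_right h hyp.le
  rw [div_mul_cancel₀ _ (ne_of_gt hyp)] at h2
  have h3 : y ^ (p - 1) = y ^ p / y := by
    rw [Real.rpow_sub hy, Real.rpow_one]
  have heq : y ^ p + p * (y ^ p / y) * (x - y) = (1 + p * (x / y - 1)) * y ^ p := by
    field_simp
  rw [h3, heq]
  exact h2

/-- The minimum of `J(φ) = ∫ Q φ - λ H_q(φ)` over probability densities equals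
`((1-q)/(2-q)) ∫ Q φ* + (λ/(2-q))(C - 1)` where `φ*(u) = exp_q(-(1/λ)Q(u) + C)`. -/
theorem entmax_min_value {m : ℕ} (q lam : ℝ) (hq0 : 0 ≤ q) (hq1 : q < 1)
    (hlam : 0 < lam) (Q : (Fin m → ℝ) → ℝ) (hQ : Measurable Q) (C : ℝ)
    (hnorm : (∫ u : Fin m → ℝ, qexp q (-(1 / lam) * Q u + C)) = 1)
    (hint : Integrable fun u : Fin m → ℝ => |Q u| * qexp q (-(1 / lam) * Q u + C)) :
    IsLeast
      {v : ℝ | ∃ φ : (Fin m → ℝ) → ℝ, Measurable φ ∧ (∀ u, 0 ≤ φ u) ∧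
        (∫ u : Fin m → ℝ, φ u) = 1 ∧
        (Integrable fun u => |Q u| * φ u) ∧
        (Integrable fun u => φ u * qlog q (φ u)) ∧
        v = Jreg q lam Q φ}
      (((1 - q) / (2 - q)) * (∫ u : Fin m → ℝ, Q u * qexp q (-(1 / lam) * Q u + C)) +
        (lam / (2 - q)) * (C - 1)) := by
  have h1q : (0:ℝ) < 1 - q := by linarith
  have h2q : (0:ℝ) < 2 - q := by linarith
  have hexpo : (1 / (1 - q) : ℝ) ≠ 0 := by positivity
  set t : (Fin m → ℝ) → ℝ := fun u => -(1 / lam) * Q u + C with ht_def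
  set φs : (Fin m → ℝ) → ℝ := fun u => qexp q (t u) with hφs_def
  have hφs_nonneg : ∀ u, 0 ≤ φs u := fun u =>
    Real.rpow_nonneg (le_max_right _ _) _
  have ht_meas : Measurable t := (hQ.const_mul _).add_const C
  have hφs_meas : Measurable φs := by
    have : Measurable fun u => max (1 + (1 - q) * t u) 0 :=
      ((ht_meas.const_mul _).const_add 1).max measurable_const
    exact (Real.continuous_rpow_const (by positivity)).measurable.comp this
  -- pointwise: on the support of φs, qlog (φs u) = t u; off it φs u = 0
  have hql : ∀ u, φs u * qlog q (φs u) = φs u * t u := by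
    intro u
    by_cases hs : 1 + (1 - q) * t u ≤ 0
    · have : φs u = 0 := by
        simp only [hφs_def, qexp, max_eq_right hs]
        exact Real.zero_rpow hexpo
      rw [this]; ring
    · push_neg at hs
      have hmax : max (1 + (1 - q) * t u) 0 = 1 + (1 - q) * t u := max_eq_left hs.le
      have hpow : φs u ^ (1 - q) = 1 + (1 - q) * t u := by
        simp only [hφs_def, qexp, hmax]
        rw [← Real.rpow_mul hs.le]
        rw [one_div_mul_cancel (ne_of_gt h1q), Real.rpow_one]
      have : qlog q (φs u) = t u := by
        rw [qlog, hpow]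
        field_simp
        ring
      rw [this]
  have hφs_int : Integrable φs := by
    by_contra hc
    rw [show integral volume φs = ∫ u, φs u from rfl, integral_undef hc] at hnorm
    norm_num at hnorm
  have hQφs_int : Integrable fun u => Q u * φs u := by
    refine Integrable.mono' hint ((hQ.mul hφs_meas).aestronglyMeasurable) ?_
    filter_upwards with u
    rw [Real.norm_eq_abs, abs_mul, abs_of_nonneg (hφs_nonneg u)]
  set A : ℝ := ∫ u : Fin m → ℝ, Q u * φs u with hA_def
  have hnorm' : (∫ u, φs u) = 1 := hnorm
  -- value of ∫ φs qlog φs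
  have hI : (∫ u, φs u * qlog q (φs u)) = -(1 / lam) * A + C := by
    have e : (fun u => φs u * qlog q (φs u))
        = fun u => -(1 / lam) * (Q u * φs u) + C * φs u := by
      funext u; rw [hql u]; ring
    rw [e, integral_add ((hQφs_int.const_mul _)) (hφs_int.const_mul C),
      integral_const_mul, integral_const_mul, hnorm', ← hA_def]
    ring
  have hfφs_int : Integrable fun u => φs u * qlog q (φs u) := by
    refine ((hQφs_int.const_mul (-(1/lam))).add (hφs_int.const_mul C)).congr ?_
    filter_upwards with u
    simp only [Pi.add_apply]
    rw [hql u, ht_def]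
    ring
  have hJs : Jreg q lam Q φs
      = ((1 - q) / (2 - q)) * A + (lam / (2 - q)) * (C - 1) := by
    rw [Jreg, deformedEntropy, hI, ← hA_def]
    field_simp
    ring
  constructor
  · exact ⟨φs, hφs_meas, hφs_nonneg, hnorm', hint, hfφs_int, hJs.symm⟩
  · rintro v ⟨φ, hφ_meas, hφ_nonneg, hφ_sum, hQφ_abs, hfφ_int, rfl⟩
    have hφ_int : Integrable φ := by
      by_contra hc
      rw [integral_undef hc] at hφ_sum
      norm_num at hφ_sum
    have hQφ_int : Integrable fun u => Q u * φ u := by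
      refine Integrable.mono' hQφ_abs ((hQ.mul hφ_meas).aestronglyMeasurable) ?_
      filter_upwards with u
      rw [Real.norm_eq_abs, abs_mul, abs_of_nonneg (hφ_nonneg u)]
    set B : ℝ := ∫ u : Fin m → ℝ, Q u * φ u with hB_def
    set g : (Fin m → ℝ) → ℝ := fun u => (1 + (2 - q) * t u) * (φ u - φs u) with hg_def
    have hg_eq : ∀ u, g u = (1 + (2 - q) * C) * (φ u - φs u)
        - ((2 - q) / lam) * (Q u * φ u - Q u * φs u) := by
      intro u
      simp only [hg_def, ht_def]
      field_simp
      ring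
    have hg_int : Integrable g := by
      refine (((hφ_int.sub hφs_int).const_mul (1 + (2 - q) * C)).sub
        ((hQφ_int.sub hQφs_int).const_mul ((2 - q) / lam))).congr ?_
      filter_upwards with u
      rw [hg_eq u]
      simp only [Pi.sub_apply]
    have hg_val : (∫ u, g u) = -((2 - q) / lam) * (B - A) := by
      have e : (fun u => g u) = fun u => (1 + (2 - q) * C) * (φ u - φs u)
          - ((2 - q) / lam) * (Q u * φ u - Q u * φs u) := funext hg_eq
      have i1 : Integrable (fun u : Fin m → ℝ => φ u - φs u) := hφ_int.sub hφs_int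
      have i2 : Integrable (fun u : Fin m → ℝ => Q u * φ u - Q u * φs u) :=
        hQφ_int.sub hQφs_int
      rw [e, integral_sub (i1.const_mul _) (i2.const_mul _),
        integral_const_mul, integral_const_mul,
        integral_sub hφ_int hφs_int, integral_sub hQφ_int hQφs_int,
        hφ_sum, hnorm', ← hA_def, ← hB_def]
      ring
    -- pointwise tangent inequality
    have hpt : ∀ u, φs u * qlog q (φs u) + g u ≤ φ u * qlog q (φ u) := by
      intro u
      set x := φ u with hx_def
      have hx : 0 ≤ x := hφ_nonneg u
      have hx2 : x * x ^ (1 - q) = x ^ (2 - q) := by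
        rw [show (2 - q : ℝ) = 1 + (1 - q) by ring,
          Real.rpow_add' hx (by intro h; apply ne_of_gt h2q; linarith), Real.rpow_one]
      have e2 : x * qlog q x = (x ^ (2 - q) - x) / (1 - q) := by
        rw [qlog, ← hx2]
        field_simp
      by_cases hs : 1 + (1 - q) * t u ≤ 0
      · have hφs0 : φs u = 0 := by
          simp only [hφs_def, qexp, max_eq_right hs]
          exact Real.zero_rpow hexpo
        rw [hφs0, e2]
        simp only [hg_def, hφs0, sub_zero, zero_mul, zero_add]
        rw [le_div_iff₀ h1q]
        have hX : 0 ≤ x ^ (2 - q) := Real.rpow_nonneg hx _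
        have htu : (1 - q) * t u ≤ -1 := by linarith
        have hsx : ((1 - q) * t u) * x ≤ -1 * x := mul_le_mul_of_nonneg_right htu hx
        have htx : (t u) * x ≤ (-1 / (1 - q)) * x := by
          rw [div_mul_eq_mul_div, le_div_iff₀ h1q]
          nlinarith
        nlinarith [mul_nonneg hx hX]
      · push_neg at hs
        set s := 1 + (1 - q) * t u with hs_def
        have hmax : max s 0 = s := max_eq_left hs.le
        set y := φs u with hy_def
        have hyval : y = s ^ (1 / (1 - q)) := by
          simp only [hy_def, hφs_def, qexp, ← hs_def, hmax]
        have hy : 0 < y := hyval ▸ Real.rpow_pos_of_pos hs _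
        have hys : y ^ (1 - q) = s := by
          rw [hyval, ← Real.rpow_mul hs.le, one_div_mul_cancel (ne_of_gt h1q),
            Real.rpow_one]
        have hy2 : y ^ (2 - q) = s * y := by
          rw [show (2 - q : ℝ) = (1 - q) + 1 by ring, Real.rpow_add hy, hys,
            Real.rpow_one]
        have hqy : qlog q y = t u := by
          rw [qlog, hys, hs_def]
          field_simp
          ring
        have key := rpow_tangent_line hx hy (show (1:ℝ) ≤ 2 - q by linarith)
        rw [show (2 - q - 1 : ℝ) = 1 - q by ring, hys, hy2] at key
        have htu : t u = (s - 1) / (1 - q) := by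
          rw [hs_def]; field_simp; ring
        have e1 : y * t u + (1 + (2 - q) * t u) * (x - y)
            = (s * y + (2 - q) * s * (x - y) - x) / (1 - q) := by
          rw [htu]; field_simp; ring
        calc y * qlog q y + g u = y * t u + (1 + (2 - q) * t u) * (x - y) := by
              rw [hqy, hg_def]
          _ = (s * y + (2 - q) * s * (x - y) - x) / (1 - q) := e1
          _ ≤ (x ^ (2 - q) - x) / (1 - q) := by
              exact (div_le_div_iff_of_pos_right h1q).mpr (by linarith [key])
          _ = x * qlog q x := e2.symm
    have hmono : (∫ u, φs u * qlog q (φs u) + g u) ≤ ∫ u, φ u * qlog q (φ u) :=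
      integral_mono (hfφs_int.add hg_int) hfφ_int hpt
    rw [integral_add hfφs_int hg_int, hI, hg_val] at hmono
    rw [Jreg, deformedEntropy, ← hB_def]
    set Iφ : ℝ := ∫ u, φ u * qlog q (φ u) with hIφ_def
    set E0 : ℝ := -(1 / lam) * A + C + -((2 - q) / lam) * (B - A) with hE0_def
    have hEkey : ((1 - q) / (2 - q)) * A + (lam / (2 - q)) * (C - 1)
        = B - lam * (-(1 / (2 - q)) * (E0 - 1)) := by
      rw [hE0_def]
      field_simp
      ring
    rw [hEkey]
    have hcoef : 0 < lam / (2 - q) := by positivity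
    have hfinal := mul_le_mul_of_nonneg_left hmono hcoef.le
    have hdiff : B - lam * (-(1 / (2 - q)) * (Iφ - 1))
        - (B - lam * (-(1 / (2 - q)) * (E0 - 1)))
        = lam / (2 - q) * Iφ - lam / (2 - q) * E0 := by
      field_simp
      ring
    linarith [hfinal, hdiff]
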